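/- Let 𝒜 = ⟨A, <⟩ be a linear order with no maximum and 𝒰 a tails ultrafilter over A (containing every final segment {j : k ≤ j}). If B ⊆ A^A is unbounded under eventual domination, then the images [f]_𝒰 for f ∈ B are cofinal-witnessing: in particular 𝔟_𝒜 ≤ cof(A^A/𝒰), where A^A/𝒰 is ordered by [f] < [g] iff {j : f(j) < g(j)} ∈ 𝒰. -/

import Mathlib

universe u

/-- A family `B` of functions `A → A` is unbounded if no single function eventually dominates
every member of `B`. -/
def Unbdd {A : Type u} [LinearOrder A] (B : Set (A → A)) : Prop :=
  ¬ ∃ h : A → A, ∀ g ∈ B, ∃ j : A, ∀ k : A, j < k → g k < h k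

/-- The cofinality of a relation `r`: the least cardinality of an `r`-cofinal subset. -/
noncomputable def rcofin {α : Type u} (r : α → α → Prop) : Cardinal.{u} :=
  ⨅ S : {S : Set α // ∀ a : α, ∃ b ∈ S, r a b}, Cardinal.mk S.1

/-- The bounding number `𝔟_𝒜`: the least cardinality of an unbounded family in `A^A`. -/
noncomputable def bcard (A : Type u) [LinearOrder A] : Cardinal.{u} :=
  ⨅ B : {B : Set (A → A) // Unbdd B}, Cardinal.mk B.1

/-- If `𝒜` has no maximum and `𝒰` is a tails ultrafilter over `A`, then
`𝔟_𝒜 ≤ cof(A^A/𝒰)`. -/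
theorem stmt12 {A : Type u} [LinearOrder A] [NoMaxOrder A] (U : Ultrafilter A)
    (htails : ∀ k : A, {j : A | k ≤ j} ∈ U) :
    bcard A ≤ rcofin ((· ≤ ·) : Filter.Germ (U : Filter A) A → Filter.Germ (U : Filter A) A → Prop) := by
  have : Nonempty {S : Set (Filter.Germ (U : Filter A) A) //
      ∀ a, ∃ b ∈ S, a ≤ b} := ⟨⟨Set.univ, fun a => ⟨a, trivial, le_rfl⟩⟩⟩
  apply le_ciInf
  rintro ⟨S, hS⟩
  choose g hg using fun s : S => Quotient.exists_rep s.1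
  have hub : Unbdd (Set.range g) := by
    rintro ⟨h, hh⟩
    obtain ⟨b, hbS, hb⟩ := hS (↑h)
    obtain ⟨j, hj⟩ := hh (g ⟨b, hbS⟩) (Set.mem_range_self _)
    obtain ⟨j', hj'⟩ := exists_gt j
    have h1 : {k | h k ≤ g ⟨b, hbS⟩ k} ∈ U := by
      have hb' : (↑h : Filter.Germ (U : Filter A) A) ≤ ↑(g ⟨b, hbS⟩) := by
        rw [show ((g ⟨b, hbS⟩ : A → A) : Filter.Germ (U : Filter A) A) = ⟦g ⟨b, hbS⟩⟧ from rfl,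
          hg ⟨b, hbS⟩]
        exact hb
      exact (Filter.Germ.coe_le.mp hb')
    have h2 : {k | j' ≤ k} ∈ U := htails j'
    obtain ⟨k, hk1, hk2⟩ := Filter.nonempty_of_mem (Filter.inter_mem h1 h2)
    exact absurd (hj k (lt_of_lt_of_le hj' hk2)) (not_lt.2 hk1)
  calc bcard A ≤ Cardinal.mk (Set.range g) := ciInf_le' _ (⟨Set.range g, hub⟩ : {B : Set (A → A) // Unbdd B})
    _ ≤ Cardinal.mk S := Cardinal.mk_range_le
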